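/- Let N ≥ 1 and suppose the integer interval [1, N] is partitioned into n sumfree parts X_1, …, X_n. For each i with X_i nonempty, let A_i = ΔX_i be the discrete derivative of X_i. Then the set of block sums of A_i can be covered by at most n − 1 sumfree subsets of ℤ. -/

import Mathlib

/-- A subset `S` of an abelian group is sumfree if there are no `x, y, z ∈ S`
with `x + y = z` (here `x = y` is allowed). -/
def Sumfree {G : Type*} [AddCommGroup G] (S : Set G) : Prop :=
  ∀ x ∈ S, ∀ y ∈ S, x + y ∉ S

/-- `B` is a block of `A`: a nonempty consecutive subsequence. -/
def IsBlock {G : Type*} (B A : List G) : Prop :=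
  B ≠ [] ∧ ∃ L R : List G, A = L ++ B ++ R

/-- The set of block sums of the finite sequence `A`. -/
def blockSums {G : Type*} [AddCommGroup G] (A : List G) : Set G :=
  {s | ∃ B : List G, IsBlock B A ∧ B.sum = s}

/-- `X` can be covered by `n` sumfree subsets. -/
def CoveredBySumfree {G : Type*} [AddCommGroup G] (n : ℕ) (X : Set G) : Prop :=
  ∃ C : Fin n → Set G, (∀ i, Sumfree (C i)) ∧ X ⊆ ⋃ i, C i

/-- The discrete derivative of a finite set `X ⊂ ℤ`: the sequence of successive
jumps `x_1 - x_0, x_2 - x_1, …, x_r - x_{r-1}` where `x_0 < x_1 < ⋯ < x_r`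
are the elements of `X` in increasing order. -/
def deltaList (X : Finset ℤ) : List ℤ :=
  List.zipWith (fun a b => b - a) (X.sort (· ≤ ·)) (X.sort (· ≤ ·)).tail

/-- The delta operation on lists. -/
def Dlt (s : List ℤ) : List ℤ := List.zipWith (fun a b => b - a) s s.tail

lemma Dlt_cons_cons (a b : ℤ) (t : List ℤ) :
    Dlt (a :: b :: t) = (b - a) :: Dlt (b :: t) := by
  simp [Dlt]

lemma Dlt_take : ∀ (t : List ℤ) (m : ℕ), Dlt (t.take (m + 1)) = (Dlt t).take m
  | [], m => by simp [Dlt]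
  | [a], m => by cases m <;> simp [Dlt]
  | a :: b :: t, 0 => by simp [Dlt]
  | a :: b :: t, (m + 1) => by
      have ih := Dlt_take (b :: t) m
      simp only [List.take, Dlt_cons_cons]
      rw [show ((b :: t).take (m + 1)) = b :: t.take m from rfl] at ih
      rw [ih]

lemma Dlt_drop : ∀ (t : List ℤ) (k : ℕ), Dlt (t.drop k) = (Dlt t).drop k
  | t, 0 => by simp
  | [], (k + 1) => by simp [Dlt]
  | [a], (k + 1) => by simp [Dlt]
  | a :: b :: t, (k + 1) => by
      have ih := Dlt_drop (b :: t) k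
      simpa [Dlt_cons_cons] using ih

lemma Dlt_sum : ∀ (t : List ℤ) (a : ℤ),
    (Dlt (a :: t)).sum = (a :: t).getLast (List.cons_ne_nil a t) - a
  | [], a => by simp [Dlt]
  | b :: t, a => by
      rw [List.getLast_cons (List.cons_ne_nil b t)]
      have ih := Dlt_sum t b
      rw [Dlt_cons_cons, List.sum_cons, ih]
      ring

lemma block_sum_eq (s L B R : List ℤ) (hB : B ≠ []) (h : Dlt s = L ++ B ++ R) :
    ∃ a b t, (a :: b :: t) <:+: s ∧
      B.sum = ((b :: t).getLast (List.cons_ne_nil b t)) - a := by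
  have hBeq : B = ((Dlt s).drop L.length).take B.length := by
    rw [h, List.append_assoc, List.drop_left, List.take_left]
  obtain ⟨m, hm⟩ : ∃ m, B.length = m + 1 := by
    cases B with
    | nil => exact absurd rfl hB
    | cons x xs => exact ⟨xs.length, rfl⟩
  have hBw : B = Dlt ((s.drop L.length).take (m + 1 + 1)) := by
    rw [hBeq, hm, ← Dlt_drop, ← Dlt_take]
  have hinf : (s.drop L.length).take (m + 1 + 1) <:+: s :=
    (List.take_prefix _ _).isInfix.trans (List.drop_suffix _ _).isInfix
  rcases hw : (s.drop L.length).take (m + 1 + 1) with _ | ⟨a, _ | ⟨b, t⟩⟩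
  · rw [hw] at hBw; simp [Dlt] at hBw; exact absurd hBw hB
  · rw [hw] at hBw; simp [Dlt] at hBw; exact absurd hBw hB
  · rw [hw] at hBw hinf
    refine ⟨a, b, t, hinf, ?_⟩
    rw [hBw, Dlt_sum, List.getLast_cons (List.cons_ne_nil b t)]

theorem blockSums_deltaList_covered (N : ℤ) (hN : 1 ≤ N) (n : ℕ)
    (X : Fin n → Finset ℤ) (hsf : ∀ i, Sumfree ((X i : Set ℤ)))
    (hdisj : Pairwise (Function.onFun Disjoint X))
    (hcov : (⋃ i, (X i : Set ℤ)) = Set.Icc 1 N)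
    (i : Fin n) (hi : (X i).Nonempty) :
    CoveredBySumfree (n - 1) (blockSums (deltaList (X i))) := by
  -- Every block sum is a difference y - x of elements of X i with x < y,
  -- hence lies in some X j with j ≠ i.
  have key : ∀ d ∈ blockSums (deltaList (X i)), ∃ j ≠ i, d ∈ (X j : Set ℤ) := by
    intro d hd
    obtain ⟨B, ⟨hB, L, R, hLR⟩, hsum⟩ := hd
    obtain ⟨a, b, t, hinf, heq⟩ := block_sum_eq _ L B R hB hLR
    set y := (b :: t).getLast (List.cons_ne_nil b t) with hy
    have hsub := hinf.subset
    have hxmem : a ∈ X i := by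
      have := hsub (by simp : a ∈ a :: b :: t)
      rwa [Finset.mem_sort] at this
    have hymem : y ∈ X i := by
      have : y ∈ a :: b :: t := by
        have := List.getLast_mem (List.cons_ne_nil b t)
        exact List.mem_cons_of_mem a this
      have := hsub this
      rwa [Finset.mem_sort] at this
    have hlt : a < y := by
      have hsorted : ((X i).sort (· ≤ ·)).Pairwise (· < ·) := (Finset.sortedLT_sort _).pairwise
      have hs2 : (a :: b :: t).Pairwise (· < ·) := hsorted.sublist hinf.sublist
      have := (List.pairwise_cons.mp hs2).1
      exact this y (List.getLast_mem (List.cons_ne_nil b t))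
    have hd' : d = y - a := by rw [← hsum, heq]
    -- d lies in [1, N]
    have hxIcc : a ∈ Set.Icc (1 : ℤ) N := by
      rw [← hcov]; exact Set.mem_iUnion.mpr ⟨i, by exact_mod_cast hxmem⟩
    have hyIcc : y ∈ Set.Icc (1 : ℤ) N := by
      rw [← hcov]; exact Set.mem_iUnion.mpr ⟨i, by exact_mod_cast hymem⟩
    have hdIcc : d ∈ Set.Icc (1 : ℤ) N := by
      obtain ⟨hx1, hxN⟩ := hxIcc
      obtain ⟨hy1, hyN⟩ := hyIcc
      constructor <;> omega
    rw [← hcov] at hdIcc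
    obtain ⟨j, hj⟩ := Set.mem_iUnion.mp hdIcc
    refine ⟨j, ?_, hj⟩
    intro hji
    subst hji
    exact hsf j a (by exact_mod_cast hxmem) d (by exact_mod_cast hj)
      (by rw [hd']; push_cast; simpa using (by exact_mod_cast hymem : (y : ℤ) ∈ (X j : Set ℤ)))
  -- Build the cover from the parts X j, j ≠ i.
  cases n with
  | zero => exact i.elim0
  | succ n' =>
    refine ⟨fun k => (X (i.succAbove k) : Set ℤ), fun k => hsf _, ?_⟩
    intro d hd
    obtain ⟨j, hji, hj⟩ := key d hd
    obtain ⟨k, hk⟩ := Fin.exists_succAbove_eq hji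
    exact Set.mem_iUnion.mpr ⟨k, by rw [hk]; exact hj⟩
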